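/- Let θ ≥ 2 be an integer and φ : Δ_θ → ℝ continuous. Then the function g : Δ_θ → ℝ given by g(x) = max_{y ∈ Δ_θ(x)} φ(y) is well-defined (the maximum is attained) and continuous on Δ_θ. -/

import Mathlib

/-- The set `Δ_θ` of decreasing probability vectors in `ℝ^θ`. -/
def simplexOrd (θ : ℕ) : Set (Fin θ → ℝ) :=
  {x | (∀ i j : Fin θ, i ≤ j → x j ≤ x i) ∧ (∀ i, 0 ≤ x i) ∧ ∑ i, x i = 1}

/-- `y ⊵ x`: domination of partial sums. -/
def domR (θ : ℕ) (y x : Fin θ → ℝ) : Prop :=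
  ∀ j : Fin θ, (∑ i ∈ Finset.univ.filter (fun i : Fin θ => i ≤ j), x i)
    ≤ ∑ i ∈ Finset.univ.filter (fun i : Fin θ => i ≤ j), y i

/-- `Δ_θ(x) = {y ∈ Δ_θ : y ⊵ x}`. -/
def domSet (θ : ℕ) (x : Fin θ → ℝ) : Set (Fin θ → ℝ) :=
  {y ∈ simplexOrd θ | domR θ y x}

namespace Stmt6Aux

/-- partial sum of the first `n` coordinates -/
noncomputable def P (θ : ℕ) (f : Fin θ → ℝ) (n : ℕ) : ℝ :=
  ∑ m ∈ Finset.range n, if h : m < θ then f ⟨m, h⟩ else 0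

variable {θ : ℕ}

lemma P_zero (f : Fin θ → ℝ) : P θ f 0 = 0 := by simp [P]

lemma P_succ (f : Fin θ → ℝ) (n : ℕ) :
    P θ f (n + 1) = P θ f n + (if h : n < θ then f ⟨n, h⟩ else 0) :=
  Finset.sum_range_succ _ _

lemma P_filter (f : Fin θ → ℝ) (n : ℕ) :
    P θ f n = ∑ i ∈ Finset.univ.filter (fun i : Fin θ => (i : ℕ) < n), f i := by
  induction n with
  | zero => simp [P]
  | succ n ih =>
    rw [P_succ, ih]
    by_cases h : n < θ
    · have hins : Finset.univ.filter (fun i : Fin θ => (i : ℕ) < n + 1)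
          = insert (⟨n, h⟩ : Fin θ) (Finset.univ.filter (fun i : Fin θ => (i : ℕ) < n)) := by
        ext i
        simp [Nat.lt_succ_iff_lt_or_eq, Fin.ext_iff, or_comm]
        omega
      rw [hins, Finset.sum_insert (by simp), dif_pos h]
      ring
    · have hfil : Finset.univ.filter (fun i : Fin θ => (i : ℕ) < n + 1)
          = Finset.univ.filter (fun i : Fin θ => (i : ℕ) < n) := by
        apply Finset.filter_congr
        intro i _
        have hi : (i : ℕ) < θ := i.isLt
        have h1 : (i : ℕ) < n := lt_of_lt_of_le hi (le_of_not_gt h)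
        simp [h1, Nat.lt_succ_of_lt h1]
      rw [hfil, dif_neg h]
      ring

lemma domR_iff (y x : Fin θ → ℝ) :
    domR θ y x ↔ ∀ j : Fin θ, P θ x ((j : ℕ) + 1) ≤ P θ y ((j : ℕ) + 1) := by
  unfold domR
  have hfe : ∀ j : Fin θ, (Finset.univ.filter (fun i : Fin θ => i ≤ j))
      = Finset.univ.filter (fun i : Fin θ => (i : ℕ) < (j : ℕ) + 1) := by
    intro j; apply Finset.filter_congr; intro i _
    rw [Fin.le_def]
    omega
  constructor
  · intro h j; rw [P_filter, P_filter, ← hfe j]; exact h j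
  · intro h j; rw [hfe j, ← P_filter, ← P_filter]; exact h j

lemma P_mono (f : Fin θ → ℝ) (hf : ∀ i, 0 ≤ f i) : Monotone (P θ f) := by
  apply monotone_nat_of_le_succ
  intro n
  rw [P_succ]
  have : (0 : ℝ) ≤ if h : n < θ then f ⟨n, h⟩ else 0 := by
    by_cases h : n < θ <;> simp [h, hf]
  linarith

lemma P_stab (f : Fin θ → ℝ) {n : ℕ} (hn : θ ≤ n) : P θ f n = P θ f θ := by
  induction n with
  | zero =>
    have h0 : θ = 0 := Nat.le_zero.mp hn
    subst h0
    rfl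
  | succ n ih =>
    rcases Nat.lt_or_ge θ (n+1) with h | h
    · have h' : θ ≤ n := by omega
      rw [P_succ, ih h', dif_neg (by omega), add_zero]
    · have hθ : θ = n + 1 := le_antisymm hn h
      subst hθ
      rfl

lemma P_theta (f : Fin θ → ℝ) : P θ f θ = ∑ i, f i := by
  rw [P_filter]
  congr 1
  apply Finset.filter_true_of_mem
  intro i _
  exact i.isLt

lemma P_le_one {x : Fin θ → ℝ} (hx : x ∈ simplexOrd θ) (n : ℕ) : P θ x n ≤ 1 := by
  obtain ⟨hdec, hpos, hsum⟩ := hx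
  rcases Nat.le_total n θ with h | h
  · calc P θ x n ≤ P θ x θ := P_mono x hpos h
      _ = 1 := by rw [P_theta, hsum]
  · rw [P_stab x h, P_theta, hsum]

lemma P_diff_le {x x' : Fin θ → ℝ} (hx : x ∈ simplexOrd θ) (hx' : x' ∈ simplexOrd θ) (n : ℕ) :
    P θ x' n - P θ x n ≤ θ * dist x x' := by
  have hd : (0:ℝ) ≤ dist x x' := dist_nonneg
  rcases Nat.le_total n θ with h | h
  · have : P θ x' n - P θ x n = ∑ m ∈ Finset.range n,
        ((if h : m < θ then x' ⟨m, h⟩ else 0) - (if h : m < θ then x ⟨m, h⟩ else 0)) := by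
      rw [Finset.sum_sub_distrib]; rfl
    rw [this]
    calc ∑ m ∈ Finset.range n,
        ((if h : m < θ then x' ⟨m, h⟩ else 0) - (if h : m < θ then x ⟨m, h⟩ else 0))
        ≤ ∑ m ∈ Finset.range n, dist x x' := by
          apply Finset.sum_le_sum
          intro m hm
          by_cases hm' : m < θ
          · simp only [dif_pos hm']
            have h1 := dist_le_pi_dist x x' ⟨m, hm'⟩
            rw [Real.dist_eq] at h1
            have := abs_le.mp h1
            linarith [this.2]
          · simp [hm', hd]
      _ = n * dist x x' := by rw [Finset.sum_const, Finset.card_range, nsmul_eq_mul]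
      _ ≤ θ * dist x x' := by
          apply mul_le_mul_of_nonneg_right _ hd
          exact_mod_cast h
  · rw [P_stab x h, P_stab x' h, P_theta, P_theta, hx.2.2, hx'.2.2]
    simp only [sub_self]
    positivity


/-- Key quantitative hemicontinuity lemma: given `y ⊵ x` we can find `y' ⊵ x'`
with `dist y' y ≤ θ * dist x x'`. -/
lemma key (hθ : 1 ≤ θ) {x x' y : Fin θ → ℝ} (hx : x ∈ simplexOrd θ)
    (hx' : x' ∈ simplexOrd θ) (hy : y ∈ domSet θ x) :
    ∃ y' ∈ domSet θ x', dist y' y ≤ θ * dist x x' := by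
  obtain ⟨hysim, hydom⟩ := hy
  obtain ⟨hydec, hypos, hysum⟩ := hysim
  set ε : ℝ := θ * dist x x' with hε
  have hε0 : 0 ≤ ε := by positivity
  -- the modified partial-sums function
  set A : ℕ → ℝ := fun n => P θ y n + (if n = 0 then 0 else ε) with hA
  set T : ℕ → ℝ := fun n => min (A n) 1 with hT
  have hT0 : T 0 = 0 := by simp [hT, hA, P_zero]
  have hTlow : ∀ n, P θ y n ≤ T n := by
    intro n
    apply le_min
    · simp only [hA]
      have : (0:ℝ) ≤ if n = 0 then 0 else ε := by by_cases h : n = 0 <;> simp [h, hε0]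
      linarith
    · exact P_le_one ⟨hydec, hypos, hysum⟩ n
  have hThigh : ∀ n, T n ≤ P θ y n + ε := by
    intro n
    refine le_trans (min_le_left _ _) ?_
    simp only [hA]
    by_cases h : n = 0 <;> simp [h, hε0]
  have hTmono : Monotone T := by
    apply monotone_nat_of_le_succ
    intro n
    apply min_le_min _ le_rfl
    simp only [hA]
    have h1 : P θ y n ≤ P θ y (n+1) := P_mono y hypos (Nat.le_succ n)
    have h2 : (if n = 0 then (0:ℝ) else ε) ≤ if n + 1 = 0 then 0 else ε := by
      by_cases h : n = 0 <;> simp [h, hε0]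
    linarith
  -- concavity of A
  have hAconc : ∀ n, A (n+2) + A n ≤ 2 * A (n+1) := by
    intro n
    simp only [hA]
    have hP : P θ y (n+2) + P θ y n ≤ 2 * P θ y (n+1) := by
      rw [P_succ y (n+1), P_succ y n]
      have : (if h : n + 1 < θ then y ⟨n+1, h⟩ else 0) ≤ (if h : n < θ then y ⟨n, h⟩ else 0) := by
        by_cases h1 : n + 1 < θ
        · have h2 : n < θ := by omega
          rw [dif_pos h1, dif_pos h2]
          exact hydec ⟨n, h2⟩ ⟨n+1, h1⟩ (by simp [Fin.le_def])
        · rw [dif_neg h1]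
          by_cases h2 : n < θ <;> simp [h2, hypos]
      linarith
    have hb : (if n + 2 = 0 then (0:ℝ) else ε) + (if n = 0 then 0 else ε)
        ≤ 2 * (if n + 1 = 0 then 0 else ε) := by
      by_cases h : n = 0 <;> simp [h, hε0] <;> linarith
    linarith
  have hTconc : ∀ n, T (n+2) + T n ≤ 2 * T (n+1) := by
    intro n
    have h1 : T (n+2) + T n ≤ min (A (n+2) + A n) 2 := by
      apply le_min
      · exact add_le_add (min_le_left _ _) (min_le_left _ _)
      · have := add_le_add (min_le_right (A (n+2)) 1) (min_le_right (A n) 1)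
        linarith
    calc T (n+2) + T n ≤ min (A (n+2) + A n) 2 := h1
      _ ≤ min (2 * A (n+1)) 2 := min_le_min (hAconc n) le_rfl
      _ = 2 * T (n+1) := by
        simp only [hT]
        rw [mul_min_of_nonneg _ _ (by norm_num : (0:ℝ) ≤ 2)]
        norm_num
  -- the step sequence is antitone
  have hstep : Antitone (fun n => T (n+1) - T n) := by
    apply antitone_nat_of_succ_le
    intro n
    have := hTconc n
    show T (n+1+1) - T (n+1) ≤ T (n+1) - T n
    linarith
  -- define y'
  set y' : Fin θ → ℝ := fun i => T ((i : ℕ) + 1) - T (i : ℕ) with hy'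
  have hy'pos : ∀ i, 0 ≤ y' i := by
    intro i
    simp only [hy']
    have := hTmono (Nat.le_succ (i : ℕ))
    linarith
  have hy'dec : ∀ i j : Fin θ, i ≤ j → y' j ≤ y' i := by
    intro i j hij
    exact hstep (by exact_mod_cast hij)
  have hTθ : T θ = 1 := by
    simp only [hT, hA]
    rw [P_theta, hysum, if_neg (by omega)]
    rw [min_eq_right (by linarith)]
  have hPy' : ∀ n, n ≤ θ → P θ y' n = T n := by
    intro n
    induction n with
    | zero => intro _; rw [P_zero, hT0]
    | succ n ih =>
      intro hn
      have hn' : n < θ := hn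
      rw [P_succ, ih (le_of_lt hn'), dif_pos hn']
      simp only [hy']
      ring
  have hy'sum : ∑ i, y' i = 1 := by
    rw [← P_theta, hPy' θ le_rfl, hTθ]
  have hy'sim : y' ∈ simplexOrd θ := ⟨hy'dec, hy'pos, hy'sum⟩
  have hy'dom : domR θ y' x' := by
    rw [domR_iff]
    intro j
    have hj : (j : ℕ) + 1 ≤ θ := j.isLt
    rw [hPy' _ hj]
    apply le_min
    · simp only [hA]
      rw [if_neg (by omega)]
      have h1 : P θ x' ((j:ℕ)+1) - P θ x ((j:ℕ)+1) ≤ ε := P_diff_le hx hx' _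
      have h2 := (domR_iff y x).mp hydom j
      linarith
    · exact P_le_one hx' _
  refine ⟨y', ⟨hy'sim, hy'dom⟩, ?_⟩
  rw [dist_pi_le_iff hε0]
  intro i
  have hi : (i : ℕ) < θ := i.isLt
  have hyi : y i = P θ y ((i:ℕ)+1) - P θ y (i:ℕ) := by
    rw [P_succ, dif_pos hi]
    simp
  rw [Real.dist_eq, abs_le]
  have l1 := hTlow (i : ℕ)
  have l2 := hThigh (i : ℕ)
  have l3 := hTlow ((i : ℕ) + 1)
  have l4 := hThigh ((i : ℕ) + 1)
  constructor
  · simp only [hy']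
    rw [hyi]
    linarith
  · simp only [hy']
    rw [hyi]
    linarith


lemma isClosed_simplexOrd : IsClosed (simplexOrd θ) := by
  have h1 : simplexOrd θ = (⋂ (i : Fin θ) (j : Fin θ), {x : Fin θ → ℝ | i ≤ j → x j ≤ x i})
      ∩ ((⋂ i : Fin θ, {x : Fin θ → ℝ | 0 ≤ x i}) ∩ {x : Fin θ → ℝ | ∑ i, x i = 1}) := by
    ext x
    simp [simplexOrd, Set.mem_iInter, and_assoc]
  rw [h1]
  apply IsClosed.inter
  · apply isClosed_iInter; intro i
    apply isClosed_iInter; intro j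
    by_cases h : i ≤ j
    · have : {x : Fin θ → ℝ | i ≤ j → x j ≤ x i} = {x : Fin θ → ℝ | x j ≤ x i} := by
        ext x; simp [h]
      rw [this]
      exact isClosed_le (continuous_apply j) (continuous_apply i)
    · have : {x : Fin θ → ℝ | i ≤ j → x j ≤ x i} = Set.univ := by
        ext x; simp [h]
      rw [this]; exact isClosed_univ
  · apply IsClosed.inter
    · apply isClosed_iInter; intro i
      exact isClosed_le continuous_const (continuous_apply i)
    · exact isClosed_eq (continuous_finset_sum _ fun i _ => continuous_apply i) continuous_const

lemma isCompact_simplexOrd : IsCompact (simplexOrd θ) := by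
  apply IsCompact.of_isClosed_subset (isCompact_Icc (a := (fun _ => 0 : Fin θ → ℝ))
    (b := (fun _ => 1 : Fin θ → ℝ))) isClosed_simplexOrd
  intro x hx
  obtain ⟨hdec, hpos, hsum⟩ := hx
  constructor
  · intro i; exact hpos i
  · intro i
    calc x i ≤ ∑ j, x j := Finset.single_le_sum (fun j _ => hpos j) (Finset.mem_univ i)
      _ = 1 := hsum

lemma isClosed_domSet (x : Fin θ → ℝ) : IsClosed (domSet θ x) := by
  have : domSet θ x = simplexOrd θ ∩ {y : Fin θ → ℝ | domR θ y x} := rfl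
  rw [this]
  apply isClosed_simplexOrd.inter
  have h2 : {y : Fin θ → ℝ | domR θ y x} = ⋂ j : Fin θ,
      {y : Fin θ → ℝ | (∑ i ∈ Finset.univ.filter (fun i : Fin θ => i ≤ j), x i)
        ≤ ∑ i ∈ Finset.univ.filter (fun i : Fin θ => i ≤ j), y i} := by
    ext y; simp [domR, Set.mem_iInter]
  rw [h2]
  apply isClosed_iInter; intro j
  exact isClosed_le continuous_const (continuous_finset_sum _ fun i _ => continuous_apply i)

lemma isCompact_domSet (x : Fin θ → ℝ) : IsCompact (domSet θ x) :=
  IsCompact.of_isClosed_subset isCompact_simplexOrd (isClosed_domSet x) (fun _ h => h.1)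

lemma mem_domSet_self {x : Fin θ → ℝ} (hx : x ∈ simplexOrd θ) : x ∈ domSet θ x :=
  ⟨hx, fun _ => le_rfl⟩

end Stmt6Aux

/-- `g(x) = max_{y ∈ Δ_θ(x)} φ(y)` is well-defined (the max is attained)
and continuous on `Δ_θ`. -/
theorem stmt6 (θ : ℕ) (hθ : 2 ≤ θ)
    (φ : (Fin θ → ℝ) → ℝ) (hφ : ContinuousOn φ (simplexOrd θ)) :
    (∀ x ∈ simplexOrd θ, IsGreatest (φ '' domSet θ x) (sSup (φ '' domSet θ x))) ∧
    ContinuousOn (fun x => sSup (φ '' domSet θ x)) (simplexOrd θ) := by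
  have hθ1 : 1 ≤ θ := by omega
  -- Part 1: the max is attained
  have part1 : ∀ x ∈ simplexOrd θ, IsGreatest (φ '' domSet θ x) (sSup (φ '' domSet θ x)) := by
    intro x hx
    have hKc : IsCompact (φ '' domSet θ x) :=
      (Stmt6Aux.isCompact_domSet x).image_of_continuousOn (hφ.mono (fun _ h => h.1))
    have hKne : (φ '' domSet θ x).Nonempty :=
      ⟨φ x, Set.mem_image_of_mem φ (Stmt6Aux.mem_domSet_self hx)⟩
    exact hKc.isGreatest_sSup hKne
  refine ⟨part1, ?_⟩
  -- Part 2: continuity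
  have hucφ : UniformContinuousOn φ (simplexOrd θ) :=
    Stmt6Aux.isCompact_simplexOrd.uniformContinuousOn_of_continuous hφ
  rw [Metric.continuousOn_iff]
  intro x hx ε hε
  obtain ⟨δ, hδ0, hδ⟩ := Metric.uniformContinuousOn_iff.mp hucφ (ε / 2) (by linarith)
  refine ⟨δ / θ, by positivity, ?_⟩
  intro x' hx' hdist
  -- key estimate: g x' close to g x
  have hmain : ∀ a b : Fin θ → ℝ, a ∈ simplexOrd θ → b ∈ simplexOrd θ →
      (θ : ℝ) * dist a b < δ →
      sSup (φ '' domSet θ a) ≤ sSup (φ '' domSet θ b) + ε / 2 := by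
    intro a b ha hb hab
    obtain ⟨⟨y, hy, hyφ⟩, _⟩ := part1 a ha
    obtain ⟨y', hy', hdy⟩ := Stmt6Aux.key hθ1 ha hb hy
    have hyS : y ∈ simplexOrd θ := hy.1
    have hy'S : y' ∈ simplexOrd θ := hy'.1
    have h1 : dist y' y < δ := lt_of_le_of_lt hdy hab
    have h2 : dist (φ y') (φ y) < ε / 2 := hδ y' hy'S y hyS h1
    have h3 : φ y ≤ φ y' + ε / 2 := by
      rw [Real.dist_eq, abs_lt] at h2
      linarith
    have h4 : φ y' ≤ sSup (φ '' domSet θ b) :=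
      (part1 b hb).2 (Set.mem_image_of_mem φ hy')
    linarith [hyφ ▸ h3]
  have hθR : (0:ℝ) < θ := by exact_mod_cast hθ1
  have hab : (θ : ℝ) * dist x' x < δ := by
    have : dist x' x < δ / θ := hdist
    calc (θ:ℝ) * dist x' x < θ * (δ / θ) := by
          apply mul_lt_mul_of_pos_left this hθR
      _ = δ := by field_simp
  have hab' : (θ : ℝ) * dist x x' < δ := by rwa [dist_comm]
  have e1 := hmain x' x hx' hx hab
  have e2 := hmain x x' hx hx' hab'
  show dist (sSup (φ '' domSet θ x')) (sSup (φ '' domSet θ x)) < ε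
  rw [Real.dist_eq, abs_lt]
  constructor <;> linarith
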